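/- No integer of the form 4abc - b - c with a, b, c positive integers is a perfect square. -/

import Mathlib

open jacobiSym NumberTheorySymbols

theorem euler_e164_cor1 (a b c : ℤ) (ha : 0 < a) (hb : 0 < b) (hc : 0 < c) :
    ¬ IsSquare (4 * a * b * c - b - c) := by
  rintro ⟨d, hd⟩
  set A := a.toNat with hA
  have haA : (A : ℤ) = a := Int.toNat_of_nonneg ha.le
  have hA1 : 1 ≤ A := by omega
  obtain ⟨B', hbB⟩ : ∃ B' : ℕ, ((B' + 1 : ℕ) : ℤ) = b :=
    ⟨b.toNat - 1, by push_cast; omega⟩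
  set n : ℕ := 4 * A * (B' + 1) - 1 with hn
  have hAB1 : 1 ≤ 4 * A * (B' + 1) := Nat.one_le_iff_ne_zero.mpr (by positivity)
  have hncast : (n : ℤ) = 4 * a * b - 1 := by
    have hbig : ((4 * A * (B' + 1) : ℕ) : ℤ) = 4 * a * b := by
      push_cast at hbB ⊢
      rw [haA, ← hbB]
    omega
  -- n % 4 = 3 and n odd
  have hmod4 : n % 4 = 3 := by
    have e : 4 * A * (B' + 1) = 4 * (A * (B' + 1)) := by ring
    have h1 : 1 ≤ A * (B' + 1) := Nat.one_le_iff_ne_zero.mpr (by positivity)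
    omega
  have hodd : Odd n := by
    rw [Nat.odd_iff]; omega
  -- -a is a square mod n
  have hsq : IsSquare ((-a : ℤ) : ZMod n) := by
    refine ⟨((2 * a * d : ℤ) : ZMod n), ?_⟩
    rw [← Int.cast_mul]
    rw [ZMod.intCast_eq_intCast_iff]
    refine Int.modEq_iff_dvd.mpr ⟨4 * a ^ 2 * c - a, ?_⟩
    rw [hncast]
    linear_combination (-4 * a ^ 2) * hd
  -- J(a | n) = 1
  have hnatAbs : a.natAbs = A := by rw [← haA]; exact Int.natAbs_natCast A
  have hnm : n % (4 * A) = 4 * A - 1 := by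
    have e : n = (4 * A) * B' + (4 * A - 1) := by
      have expand : 4 * A * (B' + 1) = 4 * A * B' + 4 * A := by ring
      omega
    rw [e, Nat.mul_add_mod, Nat.mod_eq_of_lt (by omega)]
  have hmcast : ((4 * A - 1 : ℕ) : ℤ) = 4 * a - 1 := by
    push_cast [Nat.cast_sub (by omega : 1 ≤ 4 * A)]
    rw [haA]
  have hgcd : Int.gcd (2 * a) (4 * A - 1 : ℕ) = 1 := by
    rw [← Int.isCoprime_iff_gcd_eq_one]
    exact ⟨2, -1, by rw [hmcast]; ring⟩
  have hJm : J(a | (4 * A - 1 : ℕ)) = 1 := by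
    have hcong : a ≡ (2 * a) ^ 2 [ZMOD ((4 * A - 1 : ℕ) : ℤ)] := by
      refine Int.modEq_iff_dvd.mpr ⟨a, ?_⟩
      rw [hmcast]; ring
    rw [mod_left' hcong, sq_one' hgcd]
  have hJa : J(a | n) = 1 := by
    rw [jacobiSym.mod_right a hodd, hnatAbs, hnm, hJm]
  -- J(-a | n) = -1, contradiction
  have hJneg : J(-a | n) = -1 := by
    rw [jacobiSym.neg a hodd, ZMod.χ₄_nat_three_mod_four hmod4, hJa]
    ring
  exact ZMod.nonsquare_of_jacobiSym_eq_neg_one hJneg hsq
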